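/- There exists a set F ⊆ ℕ such that (i) for every n ∈ ℕ, the set F − n contains an IP-set, and (ii) F is sum-free: for all x, y ∈ F, x + y ∉ F. In particular F is not an IP-set. -/

import Mathlib

/-- `A ⊆ ℕ` is an IP-set if it contains an increasing sequence of positive integers
together with all its finite sums (over distinct indices). -/
def IsIPSet (A : Set ℕ) : Prop :=
  ∃ a : ℕ → ℕ, StrictMono a ∧ 0 < a 0 ∧
    ∀ t : Finset ℕ, t.Nonempty → (∑ i ∈ t, a i) ∈ A

/- ### Auxiliary construction -/

/-- Exponent used at level `n`, index `i`. -/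
def expo (n i : ℕ) : ℕ := 2^n * (2*i+1)

/-- Our sum-free set: sums of distinct powers `10^(expo n i)` shifted by `n`. -/
def Fset : Set ℕ :=
  { x | ∃ n, 1 ≤ n ∧ ∃ t : Finset ℕ, t.Nonempty ∧ (∀ e ∈ t, ∃ i, e = expo n i) ∧
      x = (∑ e ∈ t, 10^e) + n }

lemma two_pow_le_expo (n i : ℕ) : 2^n ≤ expo n i := by
  have : 0 < 2*i+1 := by omega
  exact Nat.le_mul_of_pos_right _ this

lemma expo_inj_level' : ∀ a b i j : ℕ, 2^a*(2*i+1) = 2^b*(2*j+1) → a = b := by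
  intro a
  induction a with
  | zero =>
    intro b i j h
    cases b with
    | zero => rfl
    | succ b =>
      exfalso
      have h2 : (2:ℕ)^(b+1)*(2*j+1) = 2*(2^b*(2*j+1)) := by rw [pow_succ]; ring
      rw [h2] at h
      simp only [pow_zero, one_mul] at h
      omega
  | succ a ih =>
    intro b i j h
    cases b with
    | zero =>
      exfalso
      have h2 : (2:ℕ)^(a+1)*(2*i+1) = 2*(2^a*(2*i+1)) := by rw [pow_succ]; ring
      rw [h2] at h
      simp only [pow_zero, one_mul] at h
      omega
    | succ b =>
      have h2 : (2:ℕ)^(a+1)*(2*i+1) = 2*(2^a*(2*i+1)) := by rw [pow_succ]; ring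
      have h3 : (2:ℕ)^(b+1)*(2*j+1) = 2*(2^b*(2*j+1)) := by rw [pow_succ]; ring
      rw [h2, h3] at h
      have h4 : (2:ℕ)^a*(2*i+1) = 2^b*(2*j+1) := by omega
      exact congrArg Nat.succ (ih b i j h4)

lemma expo_inj_level (a b i j : ℕ) (h : expo a i = expo b j) : a = b :=
  expo_inj_level' a b i j h

lemma m_lt_pow (m : ℕ) : m < 10^(2^m) :=
  lt_trans (Nat.lt_two_pow_self) (Nat.lt_pow_self (by norm_num))

lemma sum_range_pow_lt (M : ℕ) : ∑ i ∈ Finset.range M, 10^i < 10^M := by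
  induction M with
  | zero => simp
  | succ M ih =>
    rw [Finset.sum_range_succ, pow_succ]
    have h0 : (0:ℕ) < 10^M := pow_pos (by norm_num) _
    linarith

lemma sum_pow_lt_two (t : Finset ℕ) (h : t.Nonempty) :
    ∑ e ∈ t, 10^e < 2 * 10^(t.max' h) := by
  have hsub : t ⊆ Finset.range (t.max' h + 1) := by
    intro e he
    simp only [Finset.mem_range, Nat.lt_succ_iff]
    exact Finset.le_max' t e he
  calc ∑ e ∈ t, 10^e ≤ ∑ e ∈ Finset.range (t.max' h + 1), 10^e :=
        Finset.sum_le_sum_of_subset hsub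
    _ = (∑ e ∈ Finset.range (t.max' h), 10^e) + 10^(t.max' h) := Finset.sum_range_succ _ _
    _ < 2 * 10^(t.max' h) := by have := sum_range_pow_lt (t.max' h); linarith

lemma le_sum_pow {t : Finset ℕ} {e : ℕ} (he : e ∈ t) : 10^e ≤ ∑ e ∈ t, 10^e :=
  Finset.single_le_sum (fun i _ => Nat.zero_le _) he

lemma pow_dvd_sum_pow {t : Finset ℕ} {k : ℕ} (h : ∀ e ∈ t, k ≤ e) :
    (10:ℕ)^k ∣ ∑ e ∈ t, 10^e :=
  Finset.dvd_sum (fun e he => pow_dvd_pow 10 (h e he))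

lemma pow_lt_imp {a b : ℕ} (h : (10:ℕ)^a < 10^(b+1)) : a ≤ b := by
  by_contra hc
  push_neg at hc
  have := Nat.pow_le_pow_right (by norm_num : 1 ≤ 10) hc
  omega

/-- Key lemma: a sum of distinct powers of 10 at level `n`, plus a nonempty sum of distinct
powers at level `m`, plus the shift `m`, is never a sum of distinct powers at level `n`. -/
lemma key (n m : ℕ) (hn : 1 ≤ n) (hm : 1 ≤ m) (t : Finset ℕ) (htne : t.Nonempty)
    (ht : ∀ e ∈ t, ∃ i, e = expo m i) :
    ∀ (c : ℕ) (A B : Finset ℕ), A.card = c → (∀ e ∈ A, ∃ i, e = expo n i) →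
      (∀ e ∈ B, ∃ i, e = expo n i) →
      (∑ e ∈ A, 10^e) + (∑ e ∈ t, 10^e) + m ≠ ∑ e ∈ B, 10^e := by
  intro c
  induction c using Nat.strong_induction_on with
  | _ c ih =>
    intro A B hc hA hB heq
    by_cases hmn : m ≤ n
    · -- divisibility argument: 10^(2^m) divides everything except m
      have dA : (10:ℕ)^(2^m) ∣ ∑ e ∈ A, 10^e := pow_dvd_sum_pow (fun e he => by
        obtain ⟨i, rfl⟩ := hA e he
        exact le_trans (Nat.pow_le_pow_right (by norm_num) hmn) (two_pow_le_expo n i))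
      have dt : (10:ℕ)^(2^m) ∣ ∑ e ∈ t, 10^e := pow_dvd_sum_pow (fun e he => by
        obtain ⟨i, rfl⟩ := ht e he
        exact two_pow_le_expo m i)
      have dB : (10:ℕ)^(2^m) ∣ ∑ e ∈ B, 10^e := pow_dvd_sum_pow (fun e he => by
        obtain ⟨i, rfl⟩ := hB e he
        exact le_trans (Nat.pow_le_pow_right (by norm_num) hmn) (two_pow_le_expo n i))
      have hd : (10:ℕ)^(2^m) ∣ m := by
        have h1 : (10:ℕ)^(2^m) ∣ (∑ e ∈ B, 10^e) - ((∑ e ∈ A, 10^e) + (∑ e ∈ t, 10^e)) :=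
          Nat.dvd_sub dB (dvd_add dA dt)
        have h2 : (∑ e ∈ B, 10^e) - ((∑ e ∈ A, 10^e) + (∑ e ∈ t, 10^e)) = m := by omega
        rwa [h2] at h1
      have h3 := Nat.le_of_dvd (by omega) hd
      have h4 := m_lt_pow m
      omega
    · push_neg at hmn  -- n < m
      have hBne : B.Nonempty := by
        rcases Finset.eq_empty_or_nonempty B with h | h
        · exfalso
          rw [h] at heq
          simp at heq
          omega
        · exact h
      set Q := B.max' hBne with hQ
      set P := t.max' htne with hP
      have hSB_lt : ∑ e ∈ B, 10^e < 2 * 10^Q := sum_pow_lt_two B hBne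
      have hSB_ge : 10^Q ≤ ∑ e ∈ B, 10^e := le_sum_pow (B.max'_mem hBne)
      have hSt_lt : ∑ e ∈ t, 10^e < 2 * 10^P := sum_pow_lt_two t htne
      have hSt_ge : 10^P ≤ ∑ e ∈ t, 10^e := le_sum_pow (t.max'_mem htne)
      -- m < 10^P
      have hmP : m < 10^P := by
        obtain ⟨i, hi⟩ := ht P (t.max'_mem htne)
        have h5 : 2^m ≤ P := hi ▸ two_pow_le_expo m i
        calc m < 10^(2^m) := m_lt_pow m
          _ ≤ 10^P := Nat.pow_le_pow_right (by norm_num) h5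
      have hPQ : P < Q := by
        have hPle : P ≤ Q := by
          by_contra h
          push_neg at h
          have h6 : (10:ℕ)^(Q+1) ≤ 10^P := Nat.pow_le_pow_right (by norm_num) h
          have h7 : (10:ℕ)^(Q+1) = 10 * 10^Q := by rw [pow_succ]; ring
          omega
        have hne : P ≠ Q := by
          intro hEq
          obtain ⟨i, hi⟩ := ht P (t.max'_mem htne)
          obtain ⟨j, hj⟩ := hB Q (B.max'_mem hBne)
          have : m = n := expo_inj_level m n i j (by rw [← hi, hEq, hj])
          omega
        omega
      have hQ1 : (10:ℕ)^Q = 10 * 10^(Q-1) := by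
        rw [← pow_succ']
        congr 1
        omega
      have hPQ1 : (10:ℕ)^P ≤ 10^(Q-1) := Nat.pow_le_pow_right (by norm_num) (by omega)
      rcases Finset.eq_empty_or_nonempty A with hAe | hAne
      · rw [hAe] at heq
        simp only [Finset.sum_empty, zero_add] at heq
        omega
      · set R := A.max' hAne with hR
        have hSA_lt : ∑ e ∈ A, 10^e < 2 * 10^R := sum_pow_lt_two A hAne
        have hSA_ge : 10^R ≤ ∑ e ∈ A, 10^e := le_sum_pow (A.max'_mem hAne)
        have hRQ : R ≤ Q := by
          by_contra h
          push_neg at h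
          have h6 : (10:ℕ)^(Q+1) ≤ 10^R := Nat.pow_le_pow_right (by norm_num) h
          have h7 : (10:ℕ)^(Q+1) = 10 * 10^Q := by rw [pow_succ]; ring
          omega
        rcases eq_or_lt_of_le hRQ with hREq | hRLt
        · -- strip the common top power
          have hQA : Q ∈ A := by rw [← hREq]; exact A.max'_mem hAne
          have hQB : Q ∈ B := B.max'_mem hBne
          have eA : ∑ e ∈ A, 10^e = (∑ e ∈ A.erase Q, 10^e) + 10^Q :=
            (Finset.sum_erase_add A _ hQA).symm
          have eB : ∑ e ∈ B, 10^e = (∑ e ∈ B.erase Q, 10^e) + 10^Q :=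
            (Finset.sum_erase_add B _ hQB).symm
          refine ih (A.erase Q).card ?_ (A.erase Q) (B.erase Q) rfl
            (fun e he => hA e (Finset.erase_subset _ _ he))
            (fun e he => hB e (Finset.erase_subset _ _ he)) ?_
          · rw [← hc]
            exact Finset.card_erase_lt_of_mem hQA
          · omega
        · -- R < Q : size contradiction
          have hRQ1 : (10:ℕ)^R ≤ 10^(Q-1) := Nat.pow_le_pow_right (by norm_num) (by omega)
          omega

lemma Fset_pos : ∀ x ∈ Fset, 0 < x := by
  rintro x ⟨n, hn, t, htne, ht, rfl⟩
  omega

lemma Fset_sumfree_aux : ∀ x ∈ Fset, ∀ y ∈ Fset, x ≤ y → x + y ∉ Fset := by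
  rintro x ⟨n₁, hn₁, t₁, ht₁ne, ht₁, rfl⟩ y ⟨n₂, hn₂, t₂, ht₂ne, ht₂, rfl⟩ hxy
      ⟨n₃, hn₃, t₃, ht₃ne, ht₃, heq⟩
  set T₂ := t₂.max' ht₂ne with hT₂
  set T₃ := t₃.max' ht₃ne with hT₃
  have hS₂_lt : ∑ e ∈ t₂, 10^e < 2 * 10^T₂ := sum_pow_lt_two t₂ ht₂ne
  have hS₂_ge : 10^T₂ ≤ ∑ e ∈ t₂, 10^e := le_sum_pow (t₂.max'_mem ht₂ne)
  have hS₃_lt : ∑ e ∈ t₃, 10^e < 2 * 10^T₃ := sum_pow_lt_two t₃ ht₃ne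
  have hS₃_ge : 10^T₃ ≤ ∑ e ∈ t₃, 10^e := le_sum_pow (t₃.max'_mem ht₃ne)
  have hn₂T : n₂ < 10^T₂ := by
    obtain ⟨i, hi⟩ := ht₂ T₂ (t₂.max'_mem ht₂ne)
    have h5 : 2^n₂ ≤ T₂ := hi ▸ two_pow_le_expo n₂ i
    calc n₂ < 10^(2^n₂) := m_lt_pow n₂
      _ ≤ 10^T₂ := Nat.pow_le_pow_right (by norm_num) h5
  have hn₃T : n₃ < 10^T₃ := by
    obtain ⟨i, hi⟩ := ht₃ T₃ (t₃.max'_mem ht₃ne)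
    have h5 : 2^n₃ ≤ T₃ := hi ▸ two_pow_le_expo n₃ i
    calc n₃ < 10^(2^n₃) := m_lt_pow n₃
      _ ≤ 10^T₃ := Nat.pow_le_pow_right (by norm_num) h5
  -- T₂ = T₃
  have hT23 : T₂ ≤ T₃ := by
    apply pow_lt_imp
    have h7 : (10:ℕ)^(T₃+1) = 10 * 10^T₃ := by rw [pow_succ]; ring
    omega
  have hT32 : T₃ ≤ T₂ := by
    apply pow_lt_imp
    have h7 : (10:ℕ)^(T₂+1) = 10 * 10^T₂ := by rw [pow_succ]; ring
    omega
  have hTeq : T₂ = T₃ := le_antisymm hT23 hT32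
  have hn23 : n₂ = n₃ := by
    obtain ⟨i, hi⟩ := ht₂ T₂ (t₂.max'_mem ht₂ne)
    obtain ⟨j, hj⟩ := ht₃ T₃ (t₃.max'_mem ht₃ne)
    exact expo_inj_level n₂ n₃ i j (by rw [← hi, hTeq, hj])
  clear hT₂ hT₃
  subst hn23
  exact key n₂ n₁ hn₂ hn₁ t₁ ht₁ne ht₁ t₂.card t₂ t₃ rfl ht₂ ht₃ (by omega)
  -- note: the last `by omega` must derive (∑t₂) + (∑t₁) + n₁ = ∑t₃ from heq with n₂ = n₃

lemma Fset_sumfree : ∀ x ∈ Fset, ∀ y ∈ Fset, x + y ∉ Fset := by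
  intro x hx y hy
  rcases le_total x y with h | h
  · exact Fset_sumfree_aux x hx y hy h
  · rw [add_comm]
    exact Fset_sumfree_aux y hy x hx h

theorem stmt16 :
    ∃ F : Set ℕ, (∀ x ∈ F, 0 < x) ∧
      (∀ n : ℕ, 0 < n → IsIPSet {m : ℕ | m + n ∈ F}) ∧
      (∀ x ∈ F, ∀ y ∈ F, x + y ∉ F) ∧
      ¬ IsIPSet F := by
  refine ⟨Fset, Fset_pos, ?_, Fset_sumfree, ?_⟩
  · intro n hn
    refine ⟨fun i => 10^(expo n i), ?_, ?_, ?_⟩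
    · intro i j hij
      apply Nat.pow_lt_pow_right (by norm_num)
      have h2 : (0:ℕ) < 2^n := pow_pos (by norm_num) _
      exact mul_lt_mul_of_pos_left (by omega) h2
    · exact pow_pos (by norm_num) _
    · intro t htne
      simp only [Set.mem_setOf_eq]
      refine ⟨n, hn, t.image (expo n), htne.image _, ?_, ?_⟩
      · intro e he
        obtain ⟨i, _, rfl⟩ := Finset.mem_image.mp he
        exact ⟨i, rfl⟩
      · congr 1
        rw [Finset.sum_image]
        intro i _ j _ h
        have h2 : (0:ℕ) < 2^n := pow_pos (by norm_num) _
        have := Nat.eq_of_mul_eq_mul_left h2 h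
        omega
  · rintro ⟨a, ha, hpos, hsum⟩
    have h0 : a 0 ∈ Fset := by simpa using hsum {0} ⟨0, by simp⟩
    have h1 : a 1 ∈ Fset := by simpa using hsum {1} ⟨1, by simp⟩
    have h01 : a 0 + a 1 ∈ Fset := by
      have := hsum {0, 1} ⟨0, by simp⟩
      rwa [Finset.sum_pair (by norm_num)] at this
    exact Fset_sumfree _ h0 _ h1 h01
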